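/- Let σ̃(x) = Σ_{j≥2} α_j x^j be the formal power series solution of the shifted σ-Painlevé V equation with α_2 ≠ 0. Then for each integer j with 1 ≤ j ≤ k−1 (k a positive integer, N(N+2k) ≠ 0), the coefficient α_{2j+1} satisfies 4α_{2j+1} N(N+2k)(k²−j²)/(4k²−1) = 0, hence α_{2j+1} = 0. -/

import Mathlib

open PowerSeries Finset

private lemma sum_pair {M : Type*} [AddCommMonoid M] {s : Finset (ℕ × ℕ)}
    (f : ℕ × ℕ → M) {a b : ℕ × ℕ} (ha : a ∈ s) (hb : b ∈ s) (hab : a ≠ b)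
    (h : ∀ c ∈ s, c ≠ a → c ≠ b → f c = 0) : ∑ x ∈ s, f x = f a + f b := by
  classical
  rw [← Finset.add_sum_erase s f ha]
  congr 1
  rw [← Finset.add_sum_erase _ f (Finset.mem_erase.mpr ⟨Ne.symm hab, hb⟩)]
  have hz : ∑ x ∈ (s.erase a).erase b, f x = 0 :=
    Finset.sum_eq_zero fun c hc => by
      rcases Finset.mem_erase.mp hc with ⟨hcb, hc'⟩
      rcases Finset.mem_erase.mp hc' with ⟨hca, hcs⟩
      exact h c hcs hca hcb
  rw [hz, add_zero]

set_option maxHeartbeats 1000000 in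
private lemma main_step (N : ℝ) (k : ℕ) (σ : PowerSeries ℝ)
    (heq' : (X * derivative ℝ (derivative ℝ σ)) * (X * derivative ℝ (derivative ℝ σ)) =
      C (R := ℝ) (-4) * (X * (derivative ℝ σ * (derivative ℝ σ * derivative ℝ σ)))
      + C (R := ℝ) (4 * (k:ℝ)^2) * (derivative ℝ σ * derivative ℝ σ)
      + X * (X * (derivative ℝ σ * derivative ℝ σ))
      + C (R := ℝ) 4 * (σ * (derivative ℝ σ * derivative ℝ σ))
      + C (R := ℝ) (N ^ 2 + 2 * N * (k : ℝ)) * (X * derivative ℝ σ)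
      + C (R := ℝ) (-2) * (X * (σ * derivative ℝ σ))
      + σ * σ
      + C (R := ℝ) (-(N * (N + 2 * (k : ℝ)))) * σ)
    (h0 : coeff (R := ℝ) 0 σ = 0) (h2 : coeff (R := ℝ) 2 σ ≠ 0)
    (m : ℕ) (hm : (m+3) % 2 = 1) (hlt : m + 3 < 2*k)
    (hv : ∀ l, l % 2 = 1 → l < m+3 → coeff (R := ℝ) l σ = 0) :
    coeff (R := ℝ) (m+3) σ = 0 := by
  have h1 : coeff (R := ℝ) 1 σ = 0 := hv 1 rfl (by omega)
  -- derivative coefficient formulas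
  have hc : ∀ i : ℕ, coeff (R := ℝ) i (derivative ℝ σ) = ((i:ℝ)+1) * coeff (R := ℝ) (i+1) σ := by
    intro i; rw [coeff_derivative]; push_cast; ring
  have hb : ∀ i : ℕ, coeff (R := ℝ) i (X * derivative ℝ (derivative ℝ σ))
      = (i:ℝ) * ((i:ℝ)+1) * coeff (R := ℝ) (i+1) σ := by
    intro i
    cases i with
    | zero => simp [PowerSeries.coeff_zero_eq_constantCoeff]
    | succ i => rw [coeff_succ_X_mul, coeff_derivative, coeff_derivative]; push_cast; ring
  -- the n = 2 relation
  have e2 : 4 * coeff (R := ℝ) 2 σ * coeff (R := ℝ) 2 σ * (1 - 4 * (k:ℝ)^2)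
      = N * (N + 2*(k:ℝ)) * coeff (R := ℝ) 2 σ := by
    have e2' := congrArg (coeff (R := ℝ) 2) heq'
    simp only [map_add, coeff_C_mul, show (2:ℕ) = 1+1 from rfl, coeff_succ_X_mul] at e2'
    simp only [coeff_mul, Finset.Nat.sum_antidiagonal_eq_sum_range_succ_mk, Finset.sum_range_succ,
      Finset.sum_range_zero, coeff_derivative, h0, h1] at e2'
    norm_num at e2'
    linarith [e2']
  -- S1
  have hS1 : coeff (R := ℝ) (m+3) ((X * derivative ℝ (derivative ℝ σ)) * (X * derivative ℝ (derivative ℝ σ)))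
      = 2 * ((2 * coeff (R := ℝ) 2 σ) * ((((m:ℝ)+2) * ((m:ℝ)+3)) * coeff (R := ℝ) (m+3) σ)) := by
    rw [coeff_mul]
    rw [sum_pair _ (a := ((1:ℕ), m+2)) (b := (m+2, (1:ℕ)))
        (Finset.HasAntidiagonal.mem_antidiagonal.mpr (by omega)) (Finset.HasAntidiagonal.mem_antidiagonal.mpr (by omega))
        (by simp [Prod.ext_iff]) ?_]
    · simp only [hb]; push_cast; ring
    · intro p hp hp1 hp2
      rw [Finset.HasAntidiagonal.mem_antidiagonal] at hp
      rw [hb, hb]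
      have key : p.1 = 0 ∨ p.2 = 0 ∨ ((p.1+1) % 2 = 1 ∧ p.1+1 < m+3)
          ∨ ((p.2+1) % 2 = 1 ∧ p.2+1 < m+3) := by
        have hx1 : ¬(p.1 = 1 ∧ p.2 = m+2) := fun h => hp1 (Prod.ext h.1 h.2)
        have hx2 : ¬(p.1 = m+2 ∧ p.2 = 1) := fun h => hp2 (Prod.ext h.1 h.2)
        omega
      rcases key with h | h | ⟨ho, hl⟩ | ⟨ho, hl⟩
      · rw [h]; push_cast; ring
      · rw [h]; push_cast; ring
      · rw [hv _ ho hl]; ring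
      · rw [hv _ ho hl]; ring
  -- S2
  have hS2 : coeff (R := ℝ) (m+3) (derivative ℝ σ * derivative ℝ σ)
      = 2 * ((2 * coeff (R := ℝ) 2 σ) * (((m:ℝ)+3) * coeff (R := ℝ) (m+3) σ)) := by
    rw [coeff_mul]
    rw [sum_pair _ (a := ((1:ℕ), m+2)) (b := (m+2, (1:ℕ)))
        (Finset.HasAntidiagonal.mem_antidiagonal.mpr (by omega)) (Finset.HasAntidiagonal.mem_antidiagonal.mpr (by omega))
        (by simp [Prod.ext_iff]) ?_]
    · simp only [hc]; push_cast; ring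
    · intro p hp hp1 hp2
      rw [Finset.HasAntidiagonal.mem_antidiagonal] at hp
      rw [hc, hc]
      have key : ((p.1+1) % 2 = 1 ∧ p.1+1 < m+3) ∨ ((p.2+1) % 2 = 1 ∧ p.2+1 < m+3) := by
        have hx1 : ¬(p.1 = 1 ∧ p.2 = m+2) := fun h => hp1 (Prod.ext h.1 h.2)
        have hx2 : ¬(p.1 = m+2 ∧ p.2 = 1) := fun h => hp2 (Prod.ext h.1 h.2)
        omega
      rcases key with ⟨ho, hl⟩ | ⟨ho, hl⟩
      · rw [hv _ ho hl]; ring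
      · rw [hv _ ho hl]; ring
  -- S3
  have hS3 : coeff (R := ℝ) (m+3) (X * (X * (derivative ℝ σ * derivative ℝ σ))) = 0 := by
    rw [show m+3 = (m+2)+1 from rfl, coeff_succ_X_mul, coeff_succ_X_mul, coeff_mul]
    refine Finset.sum_eq_zero fun p hp => ?_
    rw [Finset.HasAntidiagonal.mem_antidiagonal] at hp
    rw [hc, hc]
    have key : ((p.1+1) % 2 = 1 ∧ p.1+1 < m+3) ∨ ((p.2+1) % 2 = 1 ∧ p.2+1 < m+3) := by omega
    rcases key with ⟨ho, hl⟩ | ⟨ho, hl⟩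
    · rw [hv _ ho hl]; ring
    · rw [hv _ ho hl]; ring
  -- S4
  have hS4 : coeff (R := ℝ) (m+3) (σ * (derivative ℝ σ * derivative ℝ σ)) = 0 := by
    rw [coeff_mul]
    refine Finset.sum_eq_zero fun p hp => ?_
    rw [Finset.HasAntidiagonal.mem_antidiagonal] at hp
    by_cases hcase : p.1 = 0 ∨ (p.1 % 2 = 1 ∧ p.1 < m+3)
    · have hz : coeff (R := ℝ) p.1 σ = 0 := by
        rcases hcase with h | ⟨ho, hl⟩
        · rw [h]; exact h0
        · exact hv _ ho hl
      rw [hz, zero_mul]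
    · rw [coeff_mul, Finset.mul_sum]
      refine Finset.sum_eq_zero fun q hq => ?_
      rw [Finset.HasAntidiagonal.mem_antidiagonal] at hq
      rw [hc, hc]
      have key : ((q.1+1) % 2 = 1 ∧ q.1+1 < m+3) ∨ ((q.2+1) % 2 = 1 ∧ q.2+1 < m+3) := by omega
      rcases key with ⟨ho, hl⟩ | ⟨ho, hl⟩
      · rw [hv _ ho hl]; ring
      · rw [hv _ ho hl]; ring
  -- S5
  have hS5 : coeff (R := ℝ) (m+3) (X * (derivative ℝ σ * (derivative ℝ σ * derivative ℝ σ))) = 0 := by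
    rw [show m+3 = (m+2)+1 from rfl, coeff_succ_X_mul, coeff_mul]
    refine Finset.sum_eq_zero fun p hp => ?_
    rw [Finset.HasAntidiagonal.mem_antidiagonal] at hp
    rw [coeff_mul, Finset.mul_sum]
    refine Finset.sum_eq_zero fun q hq => ?_
    rw [Finset.HasAntidiagonal.mem_antidiagonal] at hq
    rw [hc, hc, hc]
    have key : ((p.1+1) % 2 = 1 ∧ p.1+1 < m+3) ∨ ((q.1+1) % 2 = 1 ∧ q.1+1 < m+3)
        ∨ ((q.2+1) % 2 = 1 ∧ q.2+1 < m+3) := by omega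
    rcases key with ⟨ho, hl⟩ | ⟨ho, hl⟩ | ⟨ho, hl⟩
    · rw [hv _ ho hl]; ring
    · rw [hv _ ho hl]; ring
    · rw [hv _ ho hl]; ring
  -- S6
  have hS6 : coeff (R := ℝ) (m+3) (X * derivative ℝ σ) = ((m:ℝ)+3) * coeff (R := ℝ) (m+3) σ := by
    rw [show m+3 = (m+2)+1 from rfl, coeff_succ_X_mul, coeff_derivative]; push_cast; ring
  -- S7
  have hS7 : coeff (R := ℝ) (m+3) (X * (σ * derivative ℝ σ)) = 0 := by
    rw [show m+3 = (m+2)+1 from rfl, coeff_succ_X_mul, coeff_mul]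
    refine Finset.sum_eq_zero fun p hp => ?_
    rw [Finset.HasAntidiagonal.mem_antidiagonal] at hp
    rw [hc]
    have key : p.1 = 0 ∨ (p.1 % 2 = 1 ∧ p.1 < m+3) ∨ ((p.2+1) % 2 = 1 ∧ p.2+1 < m+3) := by omega
    rcases key with h | ⟨ho, hl⟩ | ⟨ho, hl⟩
    · rw [h, h0]; ring
    · rw [hv _ ho hl]; ring
    · rw [hv _ ho hl]; ring
  -- S8
  have hS8 : coeff (R := ℝ) (m+3) (σ * σ) = 0 := by
    rw [coeff_mul]
    refine Finset.sum_eq_zero fun p hp => ?_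
    rw [Finset.HasAntidiagonal.mem_antidiagonal] at hp
    have key : p.1 = 0 ∨ p.2 = 0 ∨ (p.1 % 2 = 1 ∧ p.1 < m+3) ∨ (p.2 % 2 = 1 ∧ p.2 < m+3) := by
      omega
    rcases key with h | h | ⟨ho, hl⟩ | ⟨ho, hl⟩
    · rw [h, h0]; ring
    · rw [h, h0]; ring
    · rw [hv _ ho hl]; ring
    · rw [hv _ ho hl]; ring
  -- assemble
  have e := congrArg (coeff (R := ℝ) (m+3)) heq'
  rw [map_add, map_add, map_add, map_add, map_add, map_add, map_add,
    coeff_C_mul, coeff_C_mul, coeff_C_mul, coeff_C_mul, coeff_C_mul, coeff_C_mul,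
    hS1, hS2, hS3, hS4, hS5, hS6, hS7, hS8] at e
  -- final algebra
  have hprod : 4 * (coeff (R := ℝ) 2 σ) * (coeff (R := ℝ) 2 σ) * ((((m:ℝ)+2)^2 - 4*(k:ℝ)^2) * coeff (R := ℝ) (m+3) σ) = 0 := by
    linear_combination (coeff (R := ℝ) 2 σ) * e - (((m:ℝ)+2) * coeff (R := ℝ) (m+3) σ) * e2
  have hne : (((m:ℝ)+2)^2 - 4*(k:ℝ)^2) ≠ 0 := by
    have h1' : ((m:ℝ)+2) < 2*(k:ℝ) := by exact_mod_cast (by omega : m+2 < 2*k)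
    have h2' : (0:ℝ) ≤ (m:ℝ)+2 := by positivity
    nlinarith
  have := mul_eq_zero.mp hprod
  rcases this with h | h
  · exfalso; apply h2; nlinarith [sq_nonneg (coeff (R := ℝ) 2 σ)]
  · rcases mul_eq_zero.mp h with h | h
    · exact absurd h hne
    · exact h


/-- Let `σ̃(x) = Σ_{j≥2} α_j x^j` be the formal power series solution of the shifted
σ-Painlevé V equation with `α_2 ≠ 0`.  Then, for `k` a positive integer with
`N(N+2k) ≠ 0`, the odd coefficients vanish: `α_{2j+1} = 0` for `1 ≤ j ≤ k−1`. -/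
theorem sigmaPV_odd_coeffs_vanish (N : ℝ) (k : ℕ) (hk : 0 < k)
    (hN : N * (N + 2 * (k : ℝ)) ≠ 0) (σ : PowerSeries ℝ)
    (h0 : coeff (R := ℝ) 0 σ = 0) (h1 : coeff (R := ℝ) 1 σ = 0)
    (heq : (X * derivative ℝ (derivative ℝ σ)) ^ 2 =
      -4 * X * (derivative ℝ σ) ^ 3 +
        (C (R := ℝ) (4 * (k : ℝ) ^ 2) + X ^ 2 + 4 * σ) * (derivative ℝ σ) ^ 2 +
        X * (C (R := ℝ) (N ^ 2 + 2 * N * (k : ℝ)) - 2 * σ) * derivative ℝ σ +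
        (σ - C (R := ℝ) (N * (N + 2 * (k : ℝ)))) * σ)
    (h2 : coeff (R := ℝ) 2 σ ≠ 0) :
    ∀ j : ℕ, 1 ≤ j → j ≤ k - 1 → coeff (R := ℝ) (2 * j + 1) σ = 0 := by
  have heq' : (X * derivative ℝ (derivative ℝ σ)) * (X * derivative ℝ (derivative ℝ σ)) =
      C (R := ℝ) (-4) * (X * (derivative ℝ σ * (derivative ℝ σ * derivative ℝ σ)))
      + C (R := ℝ) (4 * (k:ℝ)^2) * (derivative ℝ σ * derivative ℝ σ)
      + X * (X * (derivative ℝ σ * derivative ℝ σ))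
      + C (R := ℝ) 4 * (σ * (derivative ℝ σ * derivative ℝ σ))
      + C (R := ℝ) (N ^ 2 + 2 * N * (k : ℝ)) * (X * derivative ℝ σ)
      + C (R := ℝ) (-2) * (X * (σ * derivative ℝ σ))
      + σ * σ
      + C (R := ℝ) (-(N * (N + 2 * (k : ℝ)))) * σ := by
    simp only [map_neg, map_ofNat, map_one, map_mul, map_add, map_sub, map_pow] at *
    linear_combination heq
  have key : ∀ n, n % 2 = 1 → n < 2*k → coeff (R := ℝ) n σ = 0 := by
    intro n
    induction n using Nat.strong_induction_on with
    | _ n ih =>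
      intro hodd hlt
      rcases Nat.lt_or_ge n 3 with h | h
      · have : n = 1 := by omega
        rw [this]; exact h1
      · obtain ⟨m, rfl⟩ : ∃ m, n = m + 3 := ⟨n - 3, by omega⟩
        exact main_step N k σ heq' h0 h2 m hodd hlt
          (fun l hl hln => ih l hln hl (by omega))
  intro j hj hjk
  exact key (2*j+1) (by omega) (by omega)
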